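/- arXiv:1304.0060 — 2 statements merged into one kernel-verified Lean document; each statement's English description precedes it below -/
import Mathlib

section
/- If X is an invariant subspace of a trace-preserving completely positive map E (i.e., E(X) ⊆ X where E(X) is the span of supports of E(ψ) for ψ ∈ X), then for every density operator ρ, tr(P_X E(ρ)) ≥ tr(P_X ρ), where P_X is the orthogonal projection onto X. -/
open Matrix Filter Topology
open scoped ComplexOrder

/-- The matrix of the orthogonal projection onto a subspace `X`. -/
noncomputable def projMat {d : ℕ} (X : Submodule ℂ (EuclideanSpace ℂ (Fin d))) :
    Matrix (Fin d) (Fin d) ℂ :=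
  Matrix.toEuclideanLin.symm ((X.subtypeL.comp (X.orthogonalProjectionOnto)).toLinearMap)

/-- The support of an operator: the range of the associated linear map. -/
noncomputable def matSupp {d : ℕ} (A : Matrix (Fin d) (Fin d) ℂ) :
    Submodule ℂ (EuclideanSpace ℂ (Fin d)) :=
  LinearMap.range (Matrix.toEuclideanLin A)

/-- The outer product `|v⟩⟨v|`. -/
noncomputable def outer {d : ℕ} (v : EuclideanSpace ℂ (Fin d)) : Matrix (Fin d) (Fin d) ℂ :=
  fun i j => v i * star (v j)

/-- The completely positive map `A ↦ ∑ i, E i * A * (E i)†` given by Kraus operators `E`. -/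
noncomputable def krausMap {d m : ℕ} (E : Fin m → Matrix (Fin d) (Fin d) ℂ)
    (A : Matrix (Fin d) (Fin d) ℂ) : Matrix (Fin d) (Fin d) ℂ :=
  ∑ i, E i * A * (E i)ᴴ

namespace StmtAux

variable {d m : ℕ}

lemma tel_mul (A B : Matrix (Fin d) (Fin d) ℂ) (v : EuclideanSpace ℂ (Fin d)) :
    Matrix.toEuclideanLin (A * B) v = Matrix.toEuclideanLin A (Matrix.toEuclideanLin B v) := by
  simp [Matrix.toEuclideanLin_apply, Matrix.mulVec_mulVec]

lemma trace_nn {A : Matrix (Fin d) (Fin d) ℂ} (hA : A.PosSemidef) : 0 ≤ A.trace := by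
  rw [Matrix.trace]
  exact Finset.sum_nonneg fun i _ => by
    simpa using hA.diag_nonneg (i := i)

lemma trace_mul_nn {A B : Matrix (Fin d) (Fin d) ℂ} (hA : A.PosSemidef) (hB : B.PosSemidef) :
    0 ≤ (A * B).trace := by
  obtain ⟨s, hs, rfl⟩ : ∃ s : Matrix (Fin d) (Fin d) ℂ, sᴴ = s ∧ s * s = B :=
    open scoped MatrixOrder in
    ⟨CFC.sqrt B, (Matrix.nonneg_iff_posSemidef.mp (CFC.sqrt_nonneg B)).isHermitian.eq,
      CFC.sqrt_mul_sqrt_self B (Matrix.nonneg_iff_posSemidef.mpr hB)⟩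
  have : (A * (s * s)).trace = (sᴴ * A * s).trace := by
    rw [hs, ← mul_assoc, Matrix.trace_mul_cycle]
  rw [this]
  exact trace_nn (hA.conjTranspose_mul_mul_same _)

lemma hPlin (X : Submodule ℂ (EuclideanSpace ℂ (Fin d))) :
    Matrix.toEuclideanLin (projMat X) = (X.subtypeL.comp (X.orthogonalProjectionOnto)).toLinearMap :=
  Matrix.toEuclideanLin.apply_symm_apply _

lemma hmem (X : Submodule ℂ (EuclideanSpace ℂ (Fin d))) (v : EuclideanSpace ℂ (Fin d)) :
    Matrix.toEuclideanLin (projMat X) v ∈ X := by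
  rw [hPlin]; exact (X.orthogonalProjectionOnto v).2

lemma hfix (X : Submodule ℂ (EuclideanSpace ℂ (Fin d))) {v : EuclideanSpace ℂ (Fin d)}
    (hv : v ∈ X) : Matrix.toEuclideanLin (projMat X) v = v := by
  rw [hPlin]
  simpa using congrArg Subtype.val (Submodule.orthogonalProjectionOnto_mem_subspace_eq_self (⟨v, hv⟩ : X))

lemma hPH (X : Submodule ℂ (EuclideanSpace ℂ (Fin d))) : (projMat X)ᴴ = projMat X := by
  apply Matrix.toEuclideanLin.injective
  rw [Matrix.toEuclideanLin_conjTranspose_eq_adjoint]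
  refine ((LinearMap.eq_adjoint_iff _ _).mpr fun x y => ?_).symm
  rw [hPlin]
  simpa using Submodule.inner_starProjection_left_eq_right X x y

lemma hPP (X : Submodule ℂ (EuclideanSpace ℂ (Fin d))) :
    projMat X * projMat X = projMat X := by
  apply Matrix.toEuclideanLin.injective
  refine LinearMap.ext fun v => ?_
  rw [tel_mul]
  exact hfix X (hmem X v)

lemma hPpsd (X : Submodule ℂ (EuclideanSpace ℂ (Fin d))) : (projMat X).PosSemidef := by
  have h : projMat X = (projMat X)ᴴ * projMat X := by rw [hPH, hPP]
  rw [h]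
  exact Matrix.posSemidef_conjTranspose_mul_self _

lemma outer_apply (ψ v : EuclideanSpace ℂ (Fin d)) :
    Matrix.toEuclideanLin (outer ψ) v = (inner ℂ ψ v : ℂ) • ψ := by
  ext i
  simp [outer, Matrix.toEuclideanLin_apply, Matrix.mulVec, dotProduct,
    PiLp.inner_apply, Finset.sum_mul, Finset.mul_sum]
  congr 1; ext j; ring

lemma kraus_outer_apply (E : Fin m → Matrix (Fin d) (Fin d) ℂ) (ψ v : EuclideanSpace ℂ (Fin d)) :
    Matrix.toEuclideanLin (krausMap E (outer ψ)) v
      = ∑ j, (inner ℂ (Matrix.toEuclideanLin (E j) ψ) v : ℂ) • Matrix.toEuclideanLin (E j) ψ := by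
  rw [krausMap, map_sum, LinearMap.sum_apply]
  refine Finset.sum_congr rfl fun j _ => ?_
  rw [tel_mul, tel_mul, Matrix.toEuclideanLin_conjTranspose_eq_adjoint, outer_apply,
    _root_.map_smul, LinearMap.adjoint_inner_right]

lemma mem_supp (E : Fin m → Matrix (Fin d) (Fin d) ℂ) (ψ : EuclideanSpace ℂ (Fin d)) (i : Fin m) :
    Matrix.toEuclideanLin (E i) ψ ∈ matSupp (krausMap E (outer ψ)) := by
  set w : Fin m → EuclideanSpace ℂ (Fin d) := fun j => Matrix.toEuclideanLin (E j) ψ with hw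
  set K := matSupp (krausMap E (outer ψ)) with hK
  rw [← Submodule.orthogonal_orthogonal K]
  rw [Submodule.mem_orthogonal]
  intro u hu
  have hSu : Matrix.toEuclideanLin (krausMap E (outer ψ)) u ∈ K := ⟨u, rfl⟩
  have h0 : (inner ℂ (Matrix.toEuclideanLin (krausMap E (outer ψ)) u) u : ℂ) = 0 :=
    hu _ hSu
  rw [kraus_outer_apply, sum_inner] at h0
  simp only [inner_smul_left] at h0
  have h1 : ∀ j, (inner ℂ (w j) u : ℂ) = 0 := by
    have h2 : ∑ j, Complex.normSq (inner ℂ (w j) u : ℂ) = 0 := by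
      have h3 : (↑(∑ j, Complex.normSq (inner ℂ (w j) u : ℂ)) : ℂ) = 0 := by
        rw [Complex.ofReal_sum, ← h0]
        exact Finset.sum_congr rfl fun j _ => Complex.normSq_eq_conj_mul_self
      exact_mod_cast h3
    intro j
    have := (Finset.sum_eq_zero_iff_of_nonneg
      (fun j _ => Complex.normSq_nonneg _)).mp h2 j (Finset.mem_univ j)
    exact Complex.normSq_eq_zero.mp this
  rw [← inner_conj_symm, h1 i, map_zero]

end StmtAux

open StmtAux in
/-- If `X` is invariant under the trace-preserving CP map `E`, then the probability of
lying in `X` is non-decreasing under `E`. -/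
theorem stmt0 {d m : ℕ} (E : Fin m → Matrix (Fin d) (Fin d) ℂ)
    (hE : ∑ i, (E i)ᴴ * E i = 1)
    (X : Submodule ℂ (EuclideanSpace ℂ (Fin d)))
    (hinv : ∀ ψ : EuclideanSpace ℂ (Fin d), ψ ∈ X → matSupp (krausMap E (outer ψ)) ≤ X)
    (ρ : Matrix (Fin d) (Fin d) ℂ) (hρ : ρ.PosSemidef) (hρtr : ρ.trace = 1) :
    ((projMat X * ρ).trace).re ≤ ((projMat X * krausMap E ρ).trace).re := by
  classical
  set P : Matrix (Fin d) (Fin d) ℂ := projMat X with hPdef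
  have hPH' : Pᴴ = P := by rw [hPdef]; exact hPH X
  have hPP' : P * P = P := by rw [hPdef]; exact hPP X
  -- invariance: E i maps X into X
  have hEX : ∀ (i : Fin m) (ψ : EuclideanSpace ℂ (Fin d)), ψ ∈ X →
      Matrix.toEuclideanLin (E i) ψ ∈ X := fun i ψ hψ =>
    hinv ψ hψ (mem_supp E ψ i)
  -- (1 - P) * (E i * P) = 0
  have hQEP : ∀ i : Fin m, (1 - P) * (E i * P) = 0 := by
    intro i
    apply Matrix.toEuclideanLin.injective
    refine LinearMap.ext fun v => ?_
    rw [tel_mul, tel_mul, map_zero, LinearMap.zero_apply, map_sub,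
      LinearMap.sub_apply]
    have hm : Matrix.toEuclideanLin (E i) (Matrix.toEuclideanLin P v) ∈ X :=
      hEX i _ (hmem X v)
    rw [hfix X hm, sub_eq_zero]
    simp [Matrix.toEuclideanLin_apply]
  -- E i * P = P * (E i * P), conj transpose version
  have hPEH : ∀ i : Fin m, P * (E i)ᴴ * P = P * (E i)ᴴ := by
    intro i
    have h := hQEP i
    rw [sub_mul, one_mul, sub_eq_zero] at h
    -- h : E i * P = P * (E i * P)
    have h2 : Pᴴ * (E i)ᴴ = Pᴴ * (E i)ᴴ * Pᴴ := by
      have h3 := congrArg Matrix.conjTranspose h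
      simpa [Matrix.conjTranspose_mul, mul_assoc] using h3
    rw [hPH'] at h2
    exact h2.symm
  set B : Matrix (Fin d) (Fin d) ℂ := ∑ i, (E i)ᴴ * P * E i with hBdef
  have hPB : P * B = P := by
    rw [hBdef, Finset.mul_sum]
    have : ∀ i : Fin m, P * ((E i)ᴴ * P * E i) = P * ((E i)ᴴ * E i) := by
      intro i
      rw [← mul_assoc, ← mul_assoc, hPEH i, mul_assoc]
    rw [Finset.sum_congr rfl fun i _ => this i, ← Finset.mul_sum, hE, mul_one]
  have hBH : Bᴴ = B := by
    rw [hBdef, Matrix.conjTranspose_sum]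
    refine Finset.sum_congr rfl fun i _ => ?_
    simp [Matrix.conjTranspose_mul, hPH', mul_assoc]
  have hBP : B * P = P := by
    have : B * P = (Pᴴ * Bᴴ)ᴴ := by
      rw [Matrix.conjTranspose_mul, Matrix.conjTranspose_conjTranspose,
        Matrix.conjTranspose_conjTranspose]
    rw [this, hPH', hBH, hPB, hPH']
  have hBpsd : B.PosSemidef := by
    rw [hBdef]
    refine Finset.sum_induction _ _ (fun a b ha hb => ha.add hb) (Matrix.PosSemidef.zero) ?_
    exact fun i _ => (hPpsd X).conjTranspose_mul_mul_same (E i)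
  -- C := (1-P) * B * (1-P) = B - P
  have hC : (1 - P) * B * (1 - P) = B - P := by
    calc (1 - P) * B * (1 - P) = (B - P * B) * (1 - P) := by rw [sub_mul, one_mul]
      _ = (B - P) * (1 - P) := by rw [hPB]
      _ = B - B * P - (P - P * P) := by noncomm_ring
      _ = B - P := by rw [hBP, hPP']; abel
  have hCpsd : (B - P).PosSemidef := by
    rw [← hC]
    have h1P : (1 - P)ᴴ = 1 - P := by
      rw [Matrix.conjTranspose_sub, Matrix.conjTranspose_one, hPH']
    have := hBpsd.conjTranspose_mul_mul_same (1 - P)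
    rwa [h1P] at this
  -- trace identity
  have htr : (P * krausMap E ρ).trace = (B * ρ).trace := by
    rw [krausMap, Finset.mul_sum, Matrix.trace_sum, hBdef, Finset.sum_mul,
      Matrix.trace_sum]
    refine Finset.sum_congr rfl fun i _ => ?_
    rw [← mul_assoc, ← mul_assoc, Matrix.trace_mul_comm, ← mul_assoc, ← mul_assoc]
  have hsplit : (B * ρ).trace = ((B - P) * ρ).trace + (P * ρ).trace := by
    rw [sub_mul, Matrix.trace_sub]
    ring
  have hnn : 0 ≤ (((B - P) * ρ).trace).re := by
    have h := trace_mul_nn hCpsd hρ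
    exact (Complex.le_def.mp h).1
  rw [htr, hsplit]
  simp only [Complex.add_re]
  linarith
end

section
/- A subspace X is a BSCC of a quantum Markov chain (H, E) if and only if there exists a minimal fixed point state ρ of E with supp(ρ) = X. Moreover, such ρ is the unique fixed point state (up to normalisation) whose support is contained in X. -/
open Matrix Filter Topology
open scoped ComplexOrder

/-- The reachable space of a state `ρ`: the join of the supports of all iterates. -/
noncomputable def Reach {d m : ℕ} (E : Fin m → Matrix (Fin d) (Fin d) ℂ)
    (ρ : Matrix (Fin d) (Fin d) ℂ) : Submodule ℂ (EuclideanSpace ℂ (Fin d)) :=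
  ⨆ n : ℕ, matSupp ((krausMap E)^[n] ρ)

/-- A BSCC: a nonzero invariant subspace `B` such that the reachable space of every
nonzero vector of `B` is exactly `B`. -/
noncomputable def IsBSCC {d m : ℕ} (E : Fin m → Matrix (Fin d) (Fin d) ℂ)
    (B : Submodule ℂ (EuclideanSpace ℂ (Fin d))) : Prop :=
  B ≠ ⊥ ∧
  (∀ ρ : Matrix (Fin d) (Fin d) ℂ, ρ.PosSemidef → matSupp ρ ≤ B →
      matSupp (krausMap E ρ) ≤ B) ∧
  (∀ v : EuclideanSpace ℂ (Fin d), v ∈ B → v ≠ 0 → Reach E (outer v) = B)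

/-- A fixed point state: a nonzero positive semidefinite operator with `E(ρ) = ρ`. -/
noncomputable def FixedState {d m : ℕ} (E : Fin m → Matrix (Fin d) (Fin d) ℂ)
    (ρ : Matrix (Fin d) (Fin d) ℂ) : Prop :=
  ρ.PosSemidef ∧ ρ ≠ 0 ∧ krausMap E ρ = ρ

/- ######################  Auxiliary infrastructure ###################### -/

attribute [local instance] Matrix.normedAddCommGroup Matrix.normedSpace

section Aux

variable {d m : ℕ}

local notation "Mat" => Matrix (Fin d) (Fin d) ℂ
local notation "Euc" => EuclideanSpace ℂ (Fin d)

lemma toEuc_apply (A : Mat) (x : Euc) :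
    Matrix.toEuclideanLin A x = A *ᵥ x := rfl

lemma toEuc_eq_zero (A : Mat) (x : Euc) :
    Matrix.toEuclideanLin A x = 0 ↔ A *ᵥ x = 0 := by
  constructor
  · intro h; have := congrArg WithLp.ofLp h; exact this
  · intro h; apply WithLp.ofLp_injective; exact h

lemma matSupp_eq_bot {A : Mat} : matSupp A = ⊥ ↔ A = 0 := by
  rw [matSupp, LinearMap.range_eq_bot, map_eq_zero_iff _ (Matrix.toEuclideanLin).injective]

lemma orth_matSupp {A : Mat} (hA : A.IsHermitian) :
    (matSupp A)ᗮ = LinearMap.ker (Matrix.toEuclideanLin A) := by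
  have hs := Matrix.isHermitian_iff_isSymmetric.1 hA
  ext x
  simp only [matSupp, Submodule.mem_orthogonal, LinearMap.mem_ker, LinearMap.mem_range]
  constructor
  · intro h
    have h2 : ∀ y, inner ℂ (Matrix.toEuclideanLin A x) y = (0 : ℂ) := by
      intro y
      rw [hs x y]
      have h3 := h (Matrix.toEuclideanLin A y) ⟨y, rfl⟩
      rw [← inner_conj_symm, h3, map_zero]
    exact inner_self_eq_zero.mp (h2 _)
  · rintro h u ⟨y, rfl⟩
    rw [hs y x, h, inner_zero_right]

lemma matSupp_le_iff {A : Mat} (hA : A.IsHermitian)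
    (Y : Submodule ℂ Euc) :
    matSupp A ≤ Y ↔ ∀ x ∈ Yᗮ, A *ᵥ x = 0 := by
  constructor
  · intro h x hx
    have : x ∈ (matSupp A)ᗮ := (Submodule.orthogonal_le h) hx
    rw [orth_matSupp hA] at this
    exact (toEuc_eq_zero A x).mp this
  · intro h
    have h1 : Yᗮ ≤ (matSupp A)ᗮ := by
      intro x hx; rw [orth_matSupp hA]; exact (toEuc_eq_zero A x).mpr (h x hx)
    calc matSupp A = (matSupp A)ᗮᗮ := (Submodule.orthogonal_orthogonal _).symm
      _ ≤ Yᗮᗮ := Submodule.orthogonal_le h1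
      _ = Y := Submodule.orthogonal_orthogonal _

/-- The quadratic form of a Hermitian matrix is conj-fixed. -/
lemma conj_quad {A : Mat} (hA : A.IsHermitian) (x : Fin d → ℂ) :
    (starRingEnd ℂ) (star x ⬝ᵥ A *ᵥ x) = star x ⬝ᵥ A *ᵥ x := by
  have h1 : star (star x ⬝ᵥ A *ᵥ x) = star (A *ᵥ x) ⬝ᵥ x := (star_dotProduct _ _).symm
  rw [star_mulVec, hA.eq, ← dotProduct_mulVec] at h1
  exact h1

lemma quad_im {A : Mat} (hA : A.IsHermitian) (x : Fin d → ℂ) :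
    (star x ⬝ᵥ A *ᵥ x).im = 0 := by
  have := conj_quad hA x
  rw [Complex.conj_eq_iff_im] at this
  exact this

lemma posSemidef_of_re {A : Mat} (hA : A.IsHermitian)
    (h : ∀ x : Fin d → ℂ, 0 ≤ (star x ⬝ᵥ A *ᵥ x).re) : A.PosSemidef := by
  refine Matrix.PosSemidef.of_dotProduct_mulVec_nonneg hA fun x => ?_
  rw [Complex.le_def]
  exact ⟨by simpa using h x, by simpa using (quad_im hA x).symm⟩

lemma quad_nonneg_re {A : Mat} (hA : A.PosSemidef) (x : Fin d → ℂ) :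
    0 ≤ (star x ⬝ᵥ A *ᵥ x).re := by
  have := hA.dotProduct_mulVec_nonneg x
  rw [Complex.le_def] at this
  simpa using this.1

lemma psd_smul {A : Mat} (hA : A.PosSemidef) {c : ℝ} (hc : 0 ≤ c) :
    ((c : ℂ) • A).PosSemidef := by
  have hherm : ((c : ℂ) • A).IsHermitian := by
    unfold Matrix.IsHermitian
    rw [Matrix.conjTranspose_smul, hA.1.eq, Complex.star_def, Complex.conj_ofReal]
  refine posSemidef_of_re hherm fun x => ?_
  rw [Matrix.smul_mulVec, dotProduct_smul]
  have : ((c:ℂ) • (star x ⬝ᵥ A *ᵥ x)).re = c * (star x ⬝ᵥ A *ᵥ x).re := by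
    simp [Complex.smul_re]
  rw [this]
  exact mul_nonneg hc (quad_nonneg_re hA x)

lemma star_single (i : Fin d) (c : ℂ) :
    star (Pi.single i c : Fin d → ℂ) = Pi.single i (star c) := by
  funext k
  rw [Pi.star_apply]
  by_cases h : k = i
  · subst h; rw [Pi.single_eq_same, Pi.single_eq_same]
  · rw [Pi.single_eq_of_ne h, Pi.single_eq_of_ne h, star_zero]

lemma psd_diag_re_nonneg {A : Mat} (hA : A.PosSemidef) (i : Fin d) :
    0 ≤ (A i i).re := by
  have h := quad_nonneg_re hA (Pi.single i 1)
  simpa [star_single, single_dotProduct, mulVec_single] using h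

lemma psd_abs_entry_le {A : Mat} (hA : A.PosSemidef) (i j : Fin d) :
    ‖A i j‖ ≤ ((A i i).re + (A j j).re) / 2 := by
  by_cases h0 : A i j = 0
  · rw [h0, norm_zero]
    have h1 := psd_diag_re_nonneg hA i
    have h2 := psd_diag_re_nonneg hA j
    linarith
  · set a : ℝ := ‖A i j‖ with ha
    have ha0 : a ≠ 0 := by
      rw [ha]; exact norm_ne_zero_iff.mpr h0
    set c : ℂ := -((a : ℂ) / A i j) with hc
    have hji : A j i = star (A i j) := (hA.1.apply j i).symm
    have hquad := quad_nonneg_re hA (Pi.single i 1 + Pi.single j c)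
    have hexp : star (Pi.single i (1:ℂ) + Pi.single j c) ⬝ᵥ
        A *ᵥ (Pi.single i (1:ℂ) + Pi.single j c)
        = A i i + A i j * c + star c * A j i + star c * c * A j j := by
      rw [star_add, star_single, star_single, mulVec_add, mulVec_single, mulVec_single]
      simp only [dotProduct_add, add_dotProduct, single_dotProduct, star_one]
      simp only [Pi.smul_apply, op_smul_eq_mul, Matrix.col_apply]
      ring
    have hAc : A i j * c = -(a : ℂ) := by
      rw [hc]; field_simp
    have hcc : star c * c = 1 := by
      have h2 : (Complex.normSq (A i j) : ℂ) = (a : ℂ) * (a : ℂ) := by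
        rw [Complex.normSq_eq_norm_sq, ← ha, sq, Complex.ofReal_mul]
      rw [hc, star_neg, neg_mul_neg, star_div₀, Complex.star_def, Complex.conj_ofReal,
        div_mul_div_comm, ← Complex.normSq_eq_conj_mul_self, h2, div_self]
      intro hcon
      rw [← Complex.ofReal_mul, Complex.ofReal_eq_zero] at hcon
      exact ha0 (by nlinarith [norm_nonneg (A i j)])
    have hcji : star c * A j i = -(a : ℂ) := by
      rw [hji, ← star_mul', mul_comm c (A i j), hAc, star_neg, Complex.star_def,
        Complex.conj_ofReal]
    rw [hexp, hAc, hcji, hcc, one_mul] at hquad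
    simp only [Complex.add_re, Complex.neg_re, Complex.ofReal_re] at hquad
    linarith

lemma trace_re_eq_sum {A : Mat} : A.trace.re = ∑ k, (A k k).re := by
  rw [Matrix.trace, Complex.re_sum]; rfl

lemma psd_abs_entry_le_trace {A : Mat} (hA : A.PosSemidef) (i j : Fin d) :
    ‖A i j‖ ≤ A.trace.re := by
  have h := psd_abs_entry_le hA i j
  have hi : (A i i).re ≤ A.trace.re := by
    rw [trace_re_eq_sum]
    exact Finset.single_le_sum (fun k _ => psd_diag_re_nonneg hA k) (Finset.mem_univ i)
  have hj : (A j j).re ≤ A.trace.re := by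
    rw [trace_re_eq_sum]
    exact Finset.single_le_sum (fun k _ => psd_diag_re_nonneg hA k) (Finset.mem_univ j)
  linarith

lemma psd_trace_re_nonneg {A : Mat} (hA : A.PosSemidef) : 0 ≤ A.trace.re := by
  rw [trace_re_eq_sum]
  exact Finset.sum_nonneg (fun k _ => psd_diag_re_nonneg hA k)

lemma psd_norm_le_trace {A : Mat} (hA : A.PosSemidef) : ‖A‖ ≤ A.trace.re := by
  rw [Matrix.norm_le_iff (psd_trace_re_nonneg hA)]
  intro i j
  exact psd_abs_entry_le_trace hA i j

lemma psd_trace_re_pos {A : Mat} (hA : A.PosSemidef) (hne : A ≠ 0) :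
    0 < A.trace.re := by
  rcases lt_or_eq_of_le (psd_trace_re_nonneg hA) with h | h
  · exact h
  · exfalso
    apply hne
    have h' : ∑ k, (A k k).re = 0 := by rw [← trace_re_eq_sum, ← h]
    have hdiag : ∀ k, (A k k).re = 0 := fun k =>
      (Finset.sum_eq_zero_iff_of_nonneg
        (fun k _ => psd_diag_re_nonneg hA k)).mp h' k (Finset.mem_univ k)
    ext i j
    have h1 := psd_abs_entry_le hA i j
    rw [hdiag i, hdiag j] at h1
    simp only [add_zero, zero_div] at h1
    have h2 := norm_nonneg (A i j)
    have h3 : ‖A i j‖ = 0 := le_antisymm (by linarith) h2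
    simpa using h3

/- ###### outer product lemmas ###### -/

lemma outer_mulVec (v : Euc) (x : Fin d → ℂ) :
    outer v *ᵥ x = (star v ⬝ᵥ x) • (v : Fin d → ℂ) := by
  funext i
  show ∑ j, (v i * star (v j)) * x j = (∑ j, star (v j) * x j) * v i
  rw [Finset.sum_mul]
  exact Finset.sum_congr rfl fun j _ => by ring

lemma outer_isHermitian (v : Euc) : (outer v).IsHermitian := by
  ext i j
  simp [outer, Matrix.conjTranspose_apply, mul_comm]

lemma outer_posSemidef (v : Euc) : (outer v).PosSemidef := by
  refine Matrix.PosSemidef.of_dotProduct_mulVec_nonneg (outer_isHermitian v) fun x => ?_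
  rw [outer_mulVec, dotProduct_smul]
  have hsd : star x ⬝ᵥ (v : Fin d → ℂ) = star (star v ⬝ᵥ x) := star_dotProduct _ _
  rw [smul_eq_mul, hsd]
  exact mul_star_self_nonneg _

lemma outer_trace (v : Euc) : (outer v).trace = star v ⬝ᵥ (v : Fin d → ℂ) := by
  simp [Matrix.trace, Matrix.diag, outer, dotProduct, mul_comm]

lemma outer_ne_zero {v : Euc} (hv : v ≠ 0) : outer v ≠ 0 := by
  intro h
  have h1 : (outer v).trace = 0 := by rw [h, Matrix.trace_zero]
  rw [outer_trace] at h1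
  exact hv (by simpa using dotProduct_star_self_eq_zero.mp h1)

lemma matSupp_outer_le (v : Euc) : matSupp (outer v) ≤ Submodule.span ℂ {v} := by
  rintro _ ⟨x, rfl⟩
  have hx : Matrix.toEuclideanLin (outer v) x = (star v ⬝ᵥ x) • v := by
    apply WithLp.ofLp_injective; rw [toEuc_apply, outer_mulVec]; rfl
  rw [hx]
  exact Submodule.smul_mem _ _ (Submodule.mem_span_singleton_self v)

lemma matSupp_outer {v : Euc} (hv : v ≠ 0) :
    matSupp (outer v) = Submodule.span ℂ {v} := by
  refine le_antisymm (matSupp_outer_le v) ?_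
  rw [Submodule.span_le, Set.singleton_subset_iff]
  have hvv : star (v : Fin d → ℂ) ⬝ᵥ (v : Fin d → ℂ) ≠ 0 := by
    intro h; exact hv (by simpa using dotProduct_star_self_eq_zero.mp h)
  refine ⟨(star (v : Fin d → ℂ) ⬝ᵥ (v : Fin d → ℂ))⁻¹ • v, ?_⟩
  apply WithLp.ofLp_injective
  show outer v *ᵥ ((star (v : Fin d → ℂ) ⬝ᵥ v)⁻¹ • (v : Fin d → ℂ)) = v
  rw [mulVec_smul, outer_mulVec]
  rw [smul_smul]
  rw [inv_mul_cancel₀ hvv, one_smul]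

/- ###### support comparison lemmas ###### -/

lemma matSupp_smul {A : Mat} {c : ℂ} (hc : c ≠ 0) : matSupp (c • A) = matSupp A := by
  apply le_antisymm
  · rintro _ ⟨x, rfl⟩
    refine ⟨c • x, ?_⟩
    apply WithLp.ofLp_injective
    show A *ᵥ (c • x) = (c • A) *ᵥ x
    rw [mulVec_smul, Matrix.smul_mulVec]
  · rintro _ ⟨x, rfl⟩
    refine ⟨c⁻¹ • x, ?_⟩
    apply WithLp.ofLp_injective
    show (c • A) *ᵥ (c⁻¹ • x) = A *ᵥ x
    rw [mulVec_smul, Matrix.smul_mulVec, smul_smul, inv_mul_cancel₀ hc, one_smul]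

lemma matSupp_le_of_le {A B : Mat} (hA : A.PosSemidef) (hB : B.PosSemidef)
    (h : (B - A).PosSemidef) : matSupp A ≤ matSupp B := by
  rw [matSupp_le_iff hA.1]
  intro x hx
  rw [orth_matSupp hB.1, LinearMap.mem_ker] at hx
  have hBx : B *ᵥ x = 0 := (toEuc_eq_zero B x).mp hx
  have h1 := quad_nonneg_re h x
  rw [sub_mulVec, dotProduct_sub, hBx, dotProduct_zero, zero_sub, Complex.neg_re] at h1
  have h2 := quad_nonneg_re hA x
  have him := quad_im hA.1 x
  have hre : (star x ⬝ᵥ A *ᵥ x).re = 0 := le_antisymm (by linarith) h2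
  have hz : star x ⬝ᵥ A *ᵥ x = 0 := Complex.ext hre him
  exact (hA.dotProduct_mulVec_zero_iff x).mp hz

/- ###### existence of domination constant ###### -/

lemma inner_quad (A : Mat) (x : Euc) :
    (inner ℂ x (Matrix.toEuclideanLin A x) : ℂ) = star x ⬝ᵥ A *ᵥ x := dotProduct_comm _ _

lemma quad_decomp {M : Mat} (hM : M.IsHermitian) (y z : Fin d → ℂ) (hz : M *ᵥ z = 0) :
    star (y + z) ⬝ᵥ M *ᵥ (y + z) = star y ⬝ᵥ M *ᵥ y := by
  rw [mulVec_add, hz, add_zero, star_add, add_dotProduct]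
  have h1 : star z ⬝ᵥ M *ᵥ y = 0 := by
    rw [dotProduct_mulVec]
    have h2 : star z ᵥ* M = 0 := by
      nth_rewrite 1 [← hM.eq]
      rw [← star_mulVec, hz, star_zero]
    rw [h2, zero_dotProduct]
  rw [h1, add_zero]

lemma quad_smul (M : Mat) (a : ℂ) (w : Fin d → ℂ) :
    star (a • w) ⬝ᵥ M *ᵥ (a • w) = (star a * a) * (star w ⬝ᵥ M *ᵥ w) := by
  rw [mulVec_smul, star_smul, smul_dotProduct, dotProduct_smul, smul_eq_mul, smul_eq_mul]
  ring

lemma exists_smul_psd {A B : Mat} (hA : A.PosSemidef) (hB : B.PosSemidef)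
    (h : matSupp A ≤ matSupp B) :
    ∃ c : ℝ, 0 < c ∧ ((c : ℂ) • B - A).PosSemidef := by
  by_cases hA0 : A = 0
  · exact ⟨1, one_pos, by simpa [hA0] using psd_smul hB zero_le_one⟩
  set K := matSupp B with hK
  have hTB : Continuous (Matrix.toEuclideanLin B) :=
    LinearMap.continuous_of_finiteDimensional _
  have hTA : Continuous (Matrix.toEuclideanLin A) :=
    LinearMap.continuous_of_finiteDimensional _
  set qB : Euc → ℝ := fun v => (star (v : Fin d → ℂ) ⬝ᵥ B *ᵥ (v : Fin d → ℂ)).re with hqBdef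
  set qA : Euc → ℝ := fun v => (star (v : Fin d → ℂ) ⬝ᵥ A *ᵥ (v : Fin d → ℂ)).re with hqAdef
  have hqB : Continuous qB := by
    have : qB = fun v => (inner ℂ v (Matrix.toEuclideanLin B v) : ℂ).re := by
      funext v; rw [inner_quad]
    rw [this]
    exact Complex.continuous_re.comp (continuous_inner.comp (continuous_id.prodMk hTB))
  have hqA : Continuous qA := by
    have : qA = fun v => (inner ℂ v (Matrix.toEuclideanLin A v) : ℂ).re := by
      funext v; rw [inner_quad]
    rw [this]
    exact Complex.continuous_re.comp (continuous_inner.comp (continuous_id.prodMk hTA))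
  have hKc : IsClosed (K : Set Euc) := Submodule.closed_of_finiteDimensional K
  set C : Set Euc := Metric.sphere (0 : Euc) 1 ∩ (K : Set Euc) with hCdef
  have hC : IsCompact C := (isCompact_sphere (0:Euc) 1).inter_right hKc
  have hCne : C.Nonempty := by
    have hKbot : K ≠ ⊥ := by
      intro hb
      apply hA0
      rw [← matSupp_eq_bot]
      exact le_bot_iff.mp (hb ▸ h)
    obtain ⟨w, hwK, hw0⟩ := Submodule.exists_mem_ne_zero_of_ne_bot hKbot
    refine ⟨(‖w‖:ℝ)⁻¹ • w, ?_, K.smul_of_tower_mem _ hwK⟩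
    rw [mem_sphere_zero_iff_norm, norm_smul, norm_inv, norm_norm,
      inv_mul_cancel₀ (norm_ne_zero_iff.mpr hw0)]
  obtain ⟨u0, hu0C, hmin'⟩ := hC.exists_isMinOn hCne hqB.continuousOn
  obtain ⟨u1, hu1C, hmax'⟩ := hC.exists_isMaxOn hCne hqA.continuousOn
  have hmin : ∀ y ∈ C, qB u0 ≤ qB y := fun y hy => hmin' hy
  have hmax : ∀ y ∈ C, qA y ≤ qA u1 := fun y hy => hmax' hy
  set ε : ℝ := qB u0 with hεdef
  set M : ℝ := qA u1 with hMdef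
  have hM0 : 0 ≤ M := quad_nonneg_re hA u1
  have hε : 0 < ε := by
    rcases lt_or_eq_of_le (quad_nonneg_re hB u0) with h1 | h1
    · exact h1
    · exfalso
      have hz : star (u0 : Fin d → ℂ) ⬝ᵥ B *ᵥ (u0 : Fin d → ℂ) = 0 :=
        Complex.ext h1.symm (quad_im hB.1 u0)
      have hBu0 : B *ᵥ (u0 : Fin d → ℂ) = 0 := (hB.dotProduct_mulVec_zero_iff _).mp hz
      have hu0K : u0 ∈ K := hu0C.2
      have hu0orth : u0 ∈ Kᗮ := by
        rw [hK, orth_matSupp hB.1, LinearMap.mem_ker]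
        exact (toEuc_eq_zero B u0).mpr hBu0
      have hu00 : u0 = 0 := by
        have := (Submodule.mem_orthogonal K u0).mp hu0orth u0 hu0K
        exact inner_self_eq_zero.mp this
      have hnorm := hu0C.1
      rw [mem_sphere_zero_iff_norm, hu00, norm_zero] at hnorm
      norm_num at hnorm
  refine ⟨(M + 1)/ε, by positivity, ?_⟩
  set c : ℝ := (M + 1)/ε with hcdef
  have hc0 : 0 ≤ c := by positivity
  have hherm : (((c:ℝ):ℂ) • B - A).IsHermitian := ((psd_smul hB hc0).1).sub hA.1
  refine posSemidef_of_re hherm ?_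
  suffices key : ∀ w : Euc, 0 ≤ (star (w : Fin d → ℂ) ⬝ᵥ (((c:ℝ):ℂ) • B - A) *ᵥ (w : Fin d → ℂ)).re by
    exact fun x => key (WithLp.toLp 2 x)
  intro w
  set y : Euc := (K.orthogonalProjectionOnto w : Euc) with hydef
  have hyK : y ∈ K := SetLike.coe_mem _
  set z : Euc := w - y with hzdef
  have hzmem : z ∈ Kᗮ := by
    rw [hzdef, hydef]; exact K.sub_starProjection_mem_orthogonal w
  have hx : w = y + z := by rw [hzdef]; abel
  have hBz : B *ᵥ (z : Fin d → ℂ) = 0 := by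
    have hz2 := hzmem
    rw [hK, orth_matSupp hB.1, LinearMap.mem_ker] at hz2
    exact (toEuc_eq_zero B z).mp hz2
  have hAz : A *ᵥ (z : Fin d → ℂ) = 0 := by
    have hz2 : z ∈ (matSupp A)ᗮ := Submodule.orthogonal_le h hzmem
    rw [orth_matSupp hA.1, LinearMap.mem_ker] at hz2
    exact (toEuc_eq_zero A z).mp hz2
  have hHz : (((c:ℝ):ℂ) • B - A) *ᵥ (z : Fin d → ℂ) = 0 := by
    rw [sub_mulVec, Matrix.smul_mulVec, hBz, hAz, smul_zero, sub_zero]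
  rw [hx, WithLp.ofLp_add, quad_decomp hherm y z hHz]
  have hsplit : star (y : Fin d → ℂ) ⬝ᵥ (((c:ℝ):ℂ) • B - A) *ᵥ (y : Fin d → ℂ)
      = ((c:ℝ):ℂ) * (star (y : Fin d → ℂ) ⬝ᵥ B *ᵥ (y : Fin d → ℂ))
        - star (y : Fin d → ℂ) ⬝ᵥ A *ᵥ (y : Fin d → ℂ) := by
    rw [sub_mulVec, Matrix.smul_mulVec, dotProduct_sub, dotProduct_smul, smul_eq_mul]
  rw [hsplit, Complex.sub_re, Complex.re_ofReal_mul]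
  by_cases hy0 : y = (0 : Euc)
  · rw [hy0]
    show 0 ≤ c * (star (0 : Fin d → ℂ) ⬝ᵥ B *ᵥ (0 : Fin d → ℂ)).re
      - (star (0 : Fin d → ℂ) ⬝ᵥ A *ᵥ (0 : Fin d → ℂ)).re
    simp
  · set n : ℝ := ‖y‖ with hndef
    have hn : 0 < n := norm_pos_iff.mpr hy0
    set u : Euc := ((n⁻¹ : ℝ) : ℂ) • y with hudef
    have huC : u ∈ C := by
      constructor
      · rw [mem_sphere_zero_iff_norm, hudef, norm_smul]
        rw [Complex.norm_real, Real.norm_eq_abs, abs_inv, abs_of_pos hn]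
        rw [← hndef, inv_mul_cancel₀ (ne_of_gt hn)]
      · exact K.smul_mem _ hyK
    have hyu : (y : Euc) = ((n : ℝ) : ℂ) • u := by
      rw [hudef, smul_smul, ← Complex.ofReal_mul, mul_inv_cancel₀ (ne_of_gt hn)]
      simp
    have hrB : (star (y : Fin d → ℂ) ⬝ᵥ B *ᵥ (y : Fin d → ℂ)).re = (n * n) * qB u := by
      rw [hyu]
      show (star (((n : ℝ) : ℂ) • (u : Fin d → ℂ)) ⬝ᵥ B *ᵥ (((n : ℝ) : ℂ) • (u : Fin d → ℂ))).re
        = (n * n) * qB u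
      rw [quad_smul, Complex.star_def, Complex.conj_ofReal, ← Complex.ofReal_mul,
        Complex.re_ofReal_mul]
    have hrA : (star (y : Fin d → ℂ) ⬝ᵥ A *ᵥ (y : Fin d → ℂ)).re = (n * n) * qA u := by
      rw [hyu]
      show (star (((n : ℝ) : ℂ) • (u : Fin d → ℂ)) ⬝ᵥ A *ᵥ (((n : ℝ) : ℂ) • (u : Fin d → ℂ))).re
        = (n * n) * qA u
      rw [quad_smul, Complex.star_def, Complex.conj_ofReal, ← Complex.ofReal_mul,
        Complex.re_ofReal_mul]
    rw [hrB, hrA]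
    have h1 : ε ≤ qB u := hmin u huC
    have h2 : qA u ≤ M := hmax u huC
    have h3 : c * ε = M + 1 := by
      rw [hcdef, div_mul_cancel₀ _ (ne_of_gt hε)]
    nlinarith [mul_pos hn hn, mul_le_mul_of_nonneg_left h1 hc0]

/- ###### Kraus map lemmas ###### -/

variable (E : Fin m → Matrix (Fin d) (Fin d) ℂ)

lemma kraus_add (A B : Mat) :
    krausMap E (A + B) = krausMap E A + krausMap E B := by
  simp [krausMap, mul_add, add_mul, Finset.sum_add_distrib]

lemma kraus_smul (c : ℂ) (A : Mat) :
    krausMap E (c • A) = c • krausMap E A := by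
  simp [krausMap, Matrix.mul_smul, Matrix.smul_mul, Finset.smul_sum]

lemma kraus_sub (A B : Mat) :
    krausMap E (A - B) = krausMap E A - krausMap E B := by
  simp [krausMap, mul_sub, sub_mul, Finset.sum_sub_distrib]

/-- `krausMap E` as a linear map. -/
noncomputable def krausLin : Mat →ₗ[ℂ] Mat where
  toFun := krausMap E
  map_add' := kraus_add E
  map_smul' := kraus_smul E

lemma kraus_posSemidef {A : Mat} (hA : A.PosSemidef) :
    (krausMap E A).PosSemidef :=
  Finset.sum_induction _ _ (fun a b ha hb => ha.add hb) Matrix.PosSemidef.zero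
    (fun i _ => hA.mul_mul_conjTranspose_same (E i))

lemma kraus_trace (hE : ∑ i, (E i)ᴴ * E i = 1) (A : Mat) :
    (krausMap E A).trace = A.trace := by
  rw [krausMap, Matrix.trace_sum]
  have h : ∀ i ∈ Finset.univ, (E i * A * (E i)ᴴ).trace = ((E i)ᴴ * E i * A).trace := by
    intro i _
    rw [Matrix.trace_mul_cycle, Matrix.mul_assoc]
  rw [Finset.sum_congr rfl h, ← Matrix.trace_sum, ← Finset.sum_mul, hE, Matrix.one_mul]

lemma kraus_iter_posSemidef {A : Mat} (hA : A.PosSemidef) (n : ℕ) :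
    ((krausMap E)^[n] A).PosSemidef := by
  induction n with
  | zero => exact hA
  | succ k ih => rw [Function.iterate_succ_apply']; exact kraus_posSemidef E ih

lemma kraus_iter_trace (hE : ∑ i, (E i)ᴴ * E i = 1) (A : Mat) (n : ℕ) :
    ((krausMap E)^[n] A).trace = A.trace := by
  induction n with
  | zero => rfl
  | succ k ih => rw [Function.iterate_succ_apply', kraus_trace E hE, ih]

/-- The support of a fixed point state is an invariant subspace. -/
lemma supp_kraus_le_of_fixed {ρ A : Mat} (hρ : ρ.PosSemidef)
    (hfix : krausMap E ρ = ρ) (hA : A.PosSemidef) (h : matSupp A ≤ matSupp ρ) :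
    matSupp (krausMap E A) ≤ matSupp ρ := by
  obtain ⟨c, hc, hle⟩ := exists_smul_psd hA hρ h
  have hc' : (c : ℂ) ≠ 0 := by exact_mod_cast ne_of_gt hc
  have h1 : ((c:ℂ) • ρ - krausMap E A).PosSemidef := by
    have := kraus_posSemidef E hle
    rwa [kraus_sub, kraus_smul, hfix] at this
  have h2 := matSupp_le_of_le (kraus_posSemidef E hA) (psd_smul hρ (le_of_lt hc)) h1
  rwa [matSupp_smul hc'] at h2

lemma reach_le_supp {σ : Mat} (hσ : σ.PosSemidef) (hfix : krausMap E σ = σ)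
    {w : Euc} (hw : w ∈ matSupp σ) :
    Reach E (outer w) ≤ matSupp σ := by
  refine iSup_le fun n => ?_
  induction n with
  | zero =>
    refine le_trans (matSupp_outer_le w) ?_
    rw [Submodule.span_le, Set.singleton_subset_iff]
    exact hw
  | succ k ih =>
    rw [Function.iterate_succ_apply']
    exact supp_kraus_le_of_fixed E hσ hfix (kraus_iter_posSemidef E (outer_posSemidef w) k) ih

/- ###### existence of a fixed state via Cesàro averages ###### -/

/-- Evaluation of an entry as a linear map. -/
noncomputable def entryLM (i j : Fin d) : Mat →ₗ[ℂ] ℂ where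
  toFun := fun M => M i j
  map_add' := fun _ _ => rfl
  map_smul' := fun _ _ => rfl

/-- The quadratic form at `x` as a linear map in the matrix. -/
noncomputable def quadLM (x : Fin d → ℂ) : Mat →ₗ[ℂ] ℂ where
  toFun := fun M => star x ⬝ᵥ M *ᵥ x
  map_add' := fun M N => by simp [add_mulVec, dotProduct_add]
  map_smul' := fun c M => by simp [Matrix.smul_mulVec, dotProduct_smul]

/-- `mulVec` at `x` as a linear map in the matrix. -/
noncomputable def mulVecLM (x : Fin d → ℂ) : Mat →ₗ[ℂ] (Fin d → ℂ) where
  toFun := fun M => M *ᵥ x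
  map_add' := fun M N => by simp [add_mulVec]
  map_smul' := fun c M => by simp [Matrix.smul_mulVec]

lemma exists_fixed_le (hE : ∑ i, (E i)ᴴ * E i = 1) {ρ0 : Mat} (h0 : ρ0.PosSemidef)
    (hne : ρ0 ≠ 0) (Y : Submodule ℂ Euc)
    (hY : ∀ n, matSupp ((krausMap E)^[n] ρ0) ≤ Y) :
    ∃ σ : Mat, FixedState E σ ∧ matSupp σ ≤ Y := by
  haveI : ProperSpace Mat := FiniteDimensional.proper ℂ Mat
  set t : ℝ := ρ0.trace.re with htdef
  have ht : 0 < t := psd_trace_re_pos h0 hne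
  set itr : ℕ → Mat := fun n => (krausMap E)^[n] ρ0 with hitrdef
  have hitrP : ∀ n, (itr n).PosSemidef := fun n => kraus_iter_posSemidef E h0 n
  have hitrT : ∀ n, (itr n).trace = ρ0.trace := fun n => kraus_iter_trace E hE ρ0 n
  have hitrN : ∀ n, ‖itr n‖ ≤ t := by
    intro n
    have := psd_norm_le_trace (hitrP n)
    rwa [hitrT n] at this
  set Aseq : ℕ → Mat :=
    fun N => ((((N:ℝ)+1)⁻¹ : ℝ) : ℂ) • ∑ n ∈ Finset.range (N+1), itr n with hAdef
  have hsumP : ∀ N, (∑ n ∈ Finset.range (N+1), itr n).PosSemidef := fun N =>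
    Finset.sum_induction _ _ (fun _ _ ha hb => ha.add hb) Matrix.PosSemidef.zero
      (fun n _ => hitrP n)
  have hAP : ∀ N, (Aseq N).PosSemidef := fun N =>
    psd_smul (hsumP N) (by positivity)
  have hAnorm : ∀ N, ‖Aseq N‖ ≤ t := by
    intro N
    rw [hAdef]
    rw [norm_smul]
    have h1 : ‖((((N:ℝ)+1)⁻¹ : ℝ) : ℂ)‖ = ((N:ℝ)+1)⁻¹ := by
      rw [Complex.norm_real, Real.norm_eq_abs, abs_of_pos (by positivity)]
    have h2 : ‖∑ n ∈ Finset.range (N+1), itr n‖ ≤ ((N:ℝ)+1) * t := by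
      refine le_trans (norm_sum_le _ _) ?_
      calc ∑ n ∈ Finset.range (N+1), ‖itr n‖ ≤ ∑ n ∈ Finset.range (N+1), t :=
            Finset.sum_le_sum (fun n _ => hitrN n)
        _ = ((N:ℝ)+1) * t := by
            rw [Finset.sum_const, Finset.card_range, nsmul_eq_mul]
            push_cast; ring
    rw [h1]
    calc ((N:ℝ)+1)⁻¹ * ‖∑ n ∈ Finset.range (N+1), itr n‖
        ≤ ((N:ℝ)+1)⁻¹ * (((N:ℝ)+1) * t) := by
          exact mul_le_mul_of_nonneg_left h2 (by positivity)
      _ = t := by field_simp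
  have hmem : ∀ N, Aseq N ∈ Metric.closedBall (0 : Mat) t := by
    intro N
    rw [Metric.mem_closedBall, dist_zero_right]
    exact hAnorm N
  obtain ⟨σ, hσball, φ, hφmono, hconv⟩ :=
    (isCompact_closedBall (0 : Mat) t).tendsto_subseq hmem
  -- σ is Hermitian
  have hherm : σ.IsHermitian := by
    ext i j
    have hij : Filter.Tendsto (fun N => (Aseq (φ N)) i j) atTop (𝓝 (σ i j)) :=
      ((entryLM i j).continuous_of_finiteDimensional.tendsto σ).comp hconv
    have hji : Filter.Tendsto (fun N => star ((Aseq (φ N)) j i)) atTop (𝓝 (star (σ j i))) :=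
      (Complex.continuous_conj.tendsto _).comp
        (((entryLM j i).continuous_of_finiteDimensional.tendsto σ).comp hconv)
    have heq : (fun N => star ((Aseq (φ N)) j i)) = fun N => (Aseq (φ N)) i j := by
      funext N
      exact (hAP (φ N)).1.apply i j
    rw [heq] at hji
    rw [Matrix.conjTranspose_apply]
    exact tendsto_nhds_unique hji hij
  -- σ is PSD
  have hPSD : σ.PosSemidef := by
    refine Matrix.PosSemidef.of_dotProduct_mulVec_nonneg hherm fun x => ?_
    have hq : Filter.Tendsto (fun N => star x ⬝ᵥ (Aseq (φ N)) *ᵥ x) atTop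
        (𝓝 (star x ⬝ᵥ σ *ᵥ x)) :=
      ((quadLM x).continuous_of_finiteDimensional.tendsto σ).comp hconv
    exact ge_of_tendsto' hq (fun N => (hAP (φ N)).dotProduct_mulVec_nonneg x)
  -- trace of σ
  have hAtr : ∀ N, (Aseq N).trace = ρ0.trace := by
    intro N
    rw [hAdef]
    rw [Matrix.trace_smul, Matrix.trace_sum]
    have : ∀ n ∈ Finset.range (N+1), (itr n).trace = ρ0.trace := fun n _ => hitrT n
    rw [Finset.sum_congr rfl this, Finset.sum_const, Finset.card_range, nsmul_eq_mul,
      smul_eq_mul]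
    have hne' : ((N:ℂ)+1) ≠ 0 := by
      intro hcon
      exact Nat.succ_ne_zero N (by exact_mod_cast hcon)
    push_cast
    field_simp
  have htr : σ.trace = ρ0.trace := by
    have htrc : Filter.Tendsto (fun N => (Aseq (φ N)).trace) atTop (𝓝 σ.trace) :=
      (((Matrix.traceLinearMap (Fin d) ℂ ℂ)).continuous_of_finiteDimensional.tendsto σ).comp
        hconv
    have : (fun N => (Aseq (φ N)).trace) = fun _ => ρ0.trace := by
      funext N; exact hAtr (φ N)
    rw [this] at htrc
    exact tendsto_nhds_unique htrc tendsto_const_nhds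
  have hσne : σ ≠ 0 := by
    intro hcon
    rw [hcon, Matrix.trace_zero] at htr
    rw [htdef, ← htr] at ht
    norm_num at ht
  -- σ is fixed
  have hfix : krausMap E σ = σ := by
    have hdiff : ∀ N, krausMap E (Aseq N) - Aseq N
        = ((((N:ℝ)+1)⁻¹ : ℝ) : ℂ) • (itr (N+1) - itr 0) := by
      intro N
      rw [hAdef]
      have hmap : krausMap E (∑ n ∈ Finset.range (N+1), itr n)
          = ∑ n ∈ Finset.range (N+1), itr (n+1) := by
        rw [show krausMap E (∑ n ∈ Finset.range (N+1), itr n)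
            = krausLin E (∑ n ∈ Finset.range (N+1), itr n) from rfl, map_sum]
        exact Finset.sum_congr rfl fun n _ => (Function.iterate_succ_apply' _ _ _).symm
      have hshift : ∑ n ∈ Finset.range (N+1), itr (n+1)
          = ∑ n ∈ Finset.range (N+1), itr n + itr (N+1) - itr 0 := by
        have h1 := Finset.sum_range_succ (fun n => itr n) (N+1)
        have h2 := Finset.sum_range_succ' (fun n => itr n) (N+1)
        rw [h1] at h2
        exact eq_sub_of_add_eq h2.symm
      rw [kraus_smul, hmap, hshift, ← smul_sub]
      congr 1
      abel
    have hnorm2 : ∀ N, ‖krausMap E (Aseq N) - Aseq N‖ ≤ ((N:ℝ)+1)⁻¹ * (2*t) := by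
      intro N
      rw [hdiff N, norm_smul]
      have h1 : ‖((((N:ℝ)+1)⁻¹ : ℝ) : ℂ)‖ = ((N:ℝ)+1)⁻¹ := by
        rw [Complex.norm_real, Real.norm_eq_abs, abs_of_pos (by positivity)]
      rw [h1]
      refine mul_le_mul_of_nonneg_left ?_ (by positivity)
      refine le_trans (norm_sub_le _ _) ?_
      have := hitrN (N+1); have := hitrN 0
      linarith
    have hzero : Filter.Tendsto (fun N => krausMap E (Aseq (φ N)) - Aseq (φ N)) atTop
        (𝓝 0) := by
      apply squeeze_zero_norm (fun N => hnorm2 (φ N))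
      have hb : Filter.Tendsto (fun N : ℕ => ((N:ℝ)+1)⁻¹ * (2*t)) atTop (𝓝 (0 * (2*t))) :=
        (tendsto_one_div_add_atTop_nhds_zero_nat.congr (fun n => by
          rw [one_div])).mul_const _
      rw [zero_mul] at hb
      exact hb.comp hφmono.tendsto_atTop
    have hlim : Filter.Tendsto (fun N => krausMap E (Aseq (φ N)) - Aseq (φ N)) atTop
        (𝓝 (krausMap E σ - σ)) := by
      have hk : Filter.Tendsto (fun N => krausMap E (Aseq (φ N))) atTop (𝓝 (krausMap E σ)) :=
        ((krausLin E).continuous_of_finiteDimensional.tendsto σ).comp hconv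
      exact hk.sub hconv
    have := tendsto_nhds_unique hlim hzero
    exact sub_eq_zero.mp this
  -- support of σ
  have hsupp : matSupp σ ≤ Y := by
    rw [matSupp_le_iff hherm]
    intro x hx
    have hAx : ∀ N, (Aseq N) *ᵥ (x : Fin d → ℂ) = 0 := by
      intro N
      rw [hAdef]
      rw [Matrix.smul_mulVec]
      have : (∑ n ∈ Finset.range (N+1), itr n) *ᵥ (x : Fin d → ℂ)
          = ∑ n ∈ Finset.range (N+1), (itr n) *ᵥ (x : Fin d → ℂ) := by
        rw [show (∑ n ∈ Finset.range (N+1), itr n) *ᵥ (x : Fin d → ℂ)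
            = mulVecLM x (∑ n ∈ Finset.range (N+1), itr n) from rfl, map_sum]
        rfl
      rw [this]
      have hzero : ∀ n ∈ Finset.range (N+1), (itr n) *ᵥ (x : Fin d → ℂ) = 0 := by
        intro n _
        exact (matSupp_le_iff (hitrP n).1 Y).mp (hY n) x hx
      rw [Finset.sum_congr rfl hzero, Finset.sum_const, smul_zero, smul_zero]
    have hmv : Filter.Tendsto (fun N => (Aseq (φ N)) *ᵥ (x : Fin d → ℂ)) atTop
        (𝓝 (σ *ᵥ (x : Fin d → ℂ))) :=
      ((mulVecLM x).continuous_of_finiteDimensional.tendsto σ).comp hconv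
    have : (fun N => (Aseq (φ N)) *ᵥ (x : Fin d → ℂ)) = fun _ => (0 : Fin d → ℂ) := by
      funext N; exact hAx (φ N)
    rw [this] at hmv
    exact tendsto_nhds_unique hmv tendsto_const_nhds
  exact ⟨σ, ⟨hPSD, hσne, hfix⟩, hsupp⟩

/- ###### full support and uniqueness ###### -/

lemma supp_eq_of_bscc {X : Submodule ℂ Euc} (hX : IsBSCC E X) {σ : Mat}
    (hσ : FixedState E σ) (hle : matSupp σ ≤ X) : matSupp σ = X := by
  obtain ⟨hbot, hinv, hreach⟩ := hX
  have hsne : matSupp σ ≠ ⊥ := fun hcon => hσ.2.1 (matSupp_eq_bot.mp hcon)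
  obtain ⟨w, hwmem, hw0⟩ := Submodule.exists_mem_ne_zero_of_ne_bot hsne
  have h1 : Reach E (outer w) = X := hreach w (hle hwmem) hw0
  have h2 : Reach E (outer w) ≤ matSupp σ := reach_le_supp E hσ.1 hσ.2.2 hwmem
  exact le_antisymm hle (h1 ▸ h2)

lemma unique_of_bscc {X : Submodule ℂ Euc} (hX : IsBSCC E X) {ρ σ : Mat}
    (hρ : FixedState E ρ) (hρX : matSupp ρ ≤ X)
    (hσ : FixedState E σ) (hσX : matSupp σ ≤ X) :
    ∃ c : ℝ, 0 < c ∧ σ = (c : ℂ) • ρ := by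
  have hρfull : matSupp ρ = X := supp_eq_of_bscc E hX hρ hρX
  have hσfull : matSupp σ = X := supp_eq_of_bscc E hX hσ hσX
  have hρtr : 0 < ρ.trace.re := psd_trace_re_pos hρ.1 hρ.2.1
  set S : Set ℝ := {s | 0 ≤ s ∧ (σ - (s:ℂ) • ρ).PosSemidef} with hSdef
  have h0S : (0:ℝ) ∈ S := ⟨le_refl 0, by simpa using hσ.1⟩
  have hSne : S.Nonempty := ⟨0, h0S⟩
  have hbddS : BddAbove S := by
    refine ⟨σ.trace.re / ρ.trace.re, fun s hs => ?_⟩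
    have h1 := psd_trace_re_nonneg hs.2
    have h2 : (σ - (s:ℂ) • ρ).trace = σ.trace - (s:ℂ) * ρ.trace := by
      rw [Matrix.trace_sub, Matrix.trace_smul, smul_eq_mul]
    rw [h2, Complex.sub_re, Complex.re_ofReal_mul] at h1
    rw [le_div_iff₀ hρtr]
    linarith
  set c : ℝ := sSup S with hcdef
  have hc0 : 0 ≤ c := le_csSup hbddS h0S
  have hcS : c ∈ S := by
    refine ⟨hc0, ?_⟩
    have hherm : (σ - (c:ℂ) • ρ).IsHermitian := hσ.1.1.sub (psd_smul hρ.1 hc0).1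
    refine posSemidef_of_re hherm fun x => ?_
    have hsplit : ∀ s : ℝ, (star x ⬝ᵥ (σ - (s:ℂ) • ρ) *ᵥ x).re
        = (star x ⬝ᵥ σ *ᵥ x).re - s * (star x ⬝ᵥ ρ *ᵥ x).re := by
      intro s
      rw [sub_mulVec, Matrix.smul_mulVec, dotProduct_sub, dotProduct_smul,
        smul_eq_mul, Complex.sub_re, Complex.re_ofReal_mul]
    rw [hsplit c]
    set aR : ℝ := (star x ⬝ᵥ σ *ᵥ x).re
    set bR : ℝ := (star x ⬝ᵥ ρ *ᵥ x).re
    have hbR : 0 ≤ bR := quad_nonneg_re hρ.1 x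
    have hmem : ∀ s ∈ S, s * bR ≤ aR := by
      intro s hs
      have := quad_nonneg_re hs.2 x
      rw [hsplit s] at this
      linarith
    rcases eq_or_lt_of_le hbR with hb0 | hb0
    · have := quad_nonneg_re hσ.1 x
      rw [← hb0, mul_zero]
      linarith
    · have hcle : c ≤ aR / bR := csSup_le hSne fun s hs => by
        rw [le_div_iff₀ hb0]; exact hmem s hs
      have := (le_div_iff₀ hb0).mp hcle
      linarith
  set δ : Mat := σ - (c:ℂ) • ρ with hδdef
  by_cases hδ0 : δ = 0
  · have hσc : σ = (c:ℂ) • ρ := by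
      have := sub_eq_zero.mp hδ0
      exact this
    have hcne : c ≠ 0 := by
      intro hcon
      rw [hcon] at hσc
      simp at hσc
      exact hσ.2.1 hσc
    exact ⟨c, lt_of_le_of_ne hc0 (Ne.symm hcne), hσc⟩
  · exfalso
    have hδfix : krausMap E δ = δ := by
      rw [hδdef, kraus_sub, kraus_smul, hρ.2.2, hσ.2.2]
    have hδfs : FixedState E δ := ⟨hcS.2, hδ0, hδfix⟩
    have hδsupp : matSupp δ ≤ X := by
      have hsub : (σ - δ).PosSemidef := by
        have : σ - δ = (c:ℂ) • ρ := by rw [hδdef]; abel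
        rw [this]
        exact psd_smul hρ.1 hc0
      exact le_trans (matSupp_le_of_le hcS.2 hσ.1 hsub) hσX
    have hδfull : matSupp δ = X := supp_eq_of_bscc E hX hδfs hδsupp
    obtain ⟨e, he, hesub⟩ := exists_smul_psd hρ.1 hcS.2 (by rw [hδfull, hρfull])
    have hkey : (σ - ((c + e⁻¹ : ℝ):ℂ) • ρ).PosSemidef := by
      have heq : σ - ((c + e⁻¹ : ℝ):ℂ) • ρ = ((e⁻¹ : ℝ):ℂ) • ((e:ℂ) • δ - ρ) := by
        rw [smul_sub, smul_smul, ← Complex.ofReal_mul, inv_mul_cancel₀ (ne_of_gt he),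
          Complex.ofReal_one, one_smul, hδdef]
        push_cast
        rw [add_smul]
        abel
      rw [heq]
      exact psd_smul hesub (by positivity)
    have : c + e⁻¹ ∈ S := ⟨by positivity, hkey⟩
    have := le_csSup hbddS this
    rw [← hcdef] at this
    have : e⁻¹ ≤ 0 := by linarith
    have := inv_pos.mpr he
    linarith

end Aux

/-- A subspace is a BSCC iff it is the support of a minimal fixed point state; moreover
this state is the unique fixed point state (up to normalisation) supported in it. -/
theorem stmt12 {d m : ℕ} (E : Fin m → Matrix (Fin d) (Fin d) ℂ)
    (hE : ∑ i, (E i)ᴴ * E i = 1)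
    (X : Submodule ℂ (EuclideanSpace ℂ (Fin d))) :
    IsBSCC E X ↔
    ∃ ρ : Matrix (Fin d) (Fin d) ℂ, FixedState E ρ ∧
      (∀ σ : Matrix (Fin d) (Fin d) ℂ, FixedState E σ → matSupp σ ≤ matSupp ρ → ∃ c : ℝ, 0 < c ∧ σ = (c : ℂ) • ρ) ∧
      matSupp ρ = X ∧
      (∀ σ : Matrix (Fin d) (Fin d) ℂ, FixedState E σ → matSupp σ ≤ X → ∃ c : ℝ, 0 < c ∧ σ = (c : ℂ) • ρ) := by
  constructor
  · intro hX
    obtain ⟨v, hvX, hv0⟩ := Submodule.exists_mem_ne_zero_of_ne_bot hX.1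
    have hY : ∀ n, matSupp ((krausMap E)^[n] (outer v)) ≤ X := by
      intro n
      induction n with
      | zero =>
        refine le_trans (matSupp_outer_le v) ?_
        rw [Submodule.span_le, Set.singleton_subset_iff]
        exact hvX
      | succ k ih =>
        rw [Function.iterate_succ_apply']
        exact hX.2.1 _ (kraus_iter_posSemidef E (outer_posSemidef v) k) ih
    obtain ⟨ρ, hρ, hρle⟩ := exists_fixed_le E hE (outer_posSemidef v) (outer_ne_zero hv0) X hY
    have hρX : matSupp ρ = X := supp_eq_of_bscc E hX hρ hρle
    refine ⟨ρ, hρ, ?_, hρX, ?_⟩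
    · intro σ hσ hσle
      exact unique_of_bscc E hX hρ hρle hσ (hρX ▸ hσle)
    · intro σ hσ hσle
      exact unique_of_bscc E hX hρ hρle hσ hσle
  · rintro ⟨ρ, hρ, hmin, hρX, -⟩
    refine ⟨?_, ?_, ?_⟩
    · rw [← hρX]
      exact fun hcon => hρ.2.1 (matSupp_eq_bot.mp hcon)
    · intro A hA hAle
      rw [← hρX] at hAle ⊢
      exact supp_kraus_le_of_fixed E hρ.1 hρ.2.2 hA hAle
    · intro v hvX hv0
      have hvmem : v ∈ matSupp ρ := hρX ▸ hvX
      have hYle : Reach E (outer v) ≤ matSupp ρ := reach_le_supp E hρ.1 hρ.2.2 hvmem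
      have hY : ∀ n, matSupp ((krausMap E)^[n] (outer v)) ≤ Reach E (outer v) :=
        fun n => le_iSup (fun n => matSupp ((krausMap E)^[n] (outer v))) n
      obtain ⟨σ, hσ, hσle⟩ := exists_fixed_le E hE (outer_posSemidef v) (outer_ne_zero hv0)
        (Reach E (outer v)) hY
      obtain ⟨c, hc, hceq⟩ := hmin σ hσ (le_trans hσle hYle)
      have hcne : ((c:ℝ):ℂ) ≠ 0 := by exact_mod_cast ne_of_gt hc
      have hsupps : matSupp σ = matSupp ρ := by rw [hceq, matSupp_smul hcne]
      refine le_antisymm (le_trans hYle (le_of_eq hρX)) ?_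
      rw [← hρX, ← hsupps]
      exact hσle
end
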